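/- Let G be a finite group with S ∈ Syl_p(G), and let P ≤ S satisfy C_G(P) ≤ P and N_S(P) ∈ Syl_p(N_G(P)). Then for each fusion-preserving automorphism φ of S with φ(P) = P, the restriction φ|_{N_S(P)} extends to an automorphism of N_G(P). -/

import Mathlib

namespace Stmt13

variable {G : Type*} [Group G]

def dcSetoid (T : Subgroup G) : Setoid G where
  r a b := ∃ t ∈ T, ∃ t' ∈ T, b = t * a * t'
  iseqv := by
    refine ⟨fun a => ⟨1, one_mem _, 1, one_mem _, by group⟩, ?_, ?_⟩
    · rintro a b ⟨t, ht, t', ht', rfl⟩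
      exact ⟨t⁻¹, inv_mem ht, t'⁻¹, inv_mem ht', by group⟩
    · rintro a b c ⟨t, ht, t', ht', rfl⟩ ⟨u, hu, u', hu', rfl⟩
      exact ⟨u * t, mul_mem hu ht, t' * u', mul_mem ht' hu', by group⟩

variable (T : Subgroup G)

open Classical in
noncomputable def dcRep (g : G) : G :=
  if (Quotient.mk (dcSetoid T) g) = Quotient.mk (dcSetoid T) 1 then 1
  else (Quotient.mk (dcSetoid T) g).out

lemma dc_sound {a b : G} (h : ∃ t ∈ T, ∃ t' ∈ T, b = t * a * t') :
    Quotient.mk (dcSetoid T) a = Quotient.mk (dcSetoid T) b := Quotient.sound h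

lemma dcRep_spec (g : G) : ∃ t ∈ T, ∃ t' ∈ T, g = t * dcRep T g * t' := by
  unfold dcRep
  split_ifs with h
  · obtain ⟨t, ht, t', ht', hr⟩ := Quotient.exact h
    refine ⟨t⁻¹, inv_mem ht, t'⁻¹, inv_mem ht', ?_⟩
    rw [hr]; group
  · obtain ⟨t, ht, t', ht', hr⟩ := Quotient.exact ((Quotient.mk (dcSetoid T) g).out_eq)
    exact ⟨t, ht, t', ht', hr⟩

lemma dcRep_mul_right (g : G) {t : G} (ht : t ∈ T) : dcRep T (g * t) = dcRep T g := by
  unfold dcRep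
  rw [dc_sound T (a := g * t) (b := g) ⟨1, one_mem _, t⁻¹, inv_mem ht, by group⟩]

lemma dcRep_mul_left (g : G) {t : G} (ht : t ∈ T) : dcRep T (t * g) = dcRep T g := by
  unfold dcRep
  rw [dc_sound T (a := t * g) (b := g) ⟨t⁻¹, inv_mem ht, 1, one_mem _, by group⟩]

lemma dcRep_of_mem {g : G} (hg : g ∈ T) : dcRep T g = 1 := by
  unfold dcRep
  rw [if_pos (dc_sound T (a := g) (b := 1) ⟨g⁻¹, inv_mem hg, 1, one_mem _, by group⟩)]

lemma dcRep_mem {N : Subgroup G} (hTN : T ≤ N) {g : G} (hg : g ∈ N) : dcRep T g ∈ N := by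
  obtain ⟨t, ht, t', ht', hr⟩ := dcRep_spec T g
  have h2 : dcRep T g = t⁻¹ * g * t'⁻¹ := by
    conv_rhs => rw [hr]
    group
  rw [h2]
  exact mul_mem (mul_mem (inv_mem (hTN ht)) hg) (inv_mem (hTN ht'))

/-- chosen left factor in the decomposition `g = τ g * dcRep g * τ' g`. -/
noncomputable def tauFun (g : G) : G := (dcRep_spec T g).choose

lemma tauFun_mem (g : G) : tauFun T g ∈ T := (dcRep_spec T g).choose_spec.1

noncomputable def tauFun' (g : G) : G := (dcRep T g)⁻¹ * (tauFun T g)⁻¹ * g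

lemma decomp (g : G) : g = tauFun T g * dcRep T g * tauFun' T g := by
  unfold tauFun'; group

lemma tauFun'_mem (g : G) : tauFun' T g ∈ T := by
  have e := (dcRep_spec T g).choose_spec.2
  have heq : g = tauFun T g * dcRep T g * e.choose := e.choose_spec.2
  have h2 : tauFun' T g = e.choose := mul_left_cancel ((decomp T g).symm.trans heq)
  rw [h2]; exact e.choose_spec.1

section SFun

variable {G : Type*} [Group G] (N T : Subgroup G) (f : G → G) (Rel : G → G → Prop)
variable (hH5 : ∀ g ∈ N, ∃ h, Rel g h ∧ ∀ x ∈ T, g⁻¹ * x * g ∈ T → h * f (g⁻¹ * x * g) * h⁻¹ = f x)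

open Classical in
noncomputable def Hfun (g : G) : G :=
  if g = 1 then 1 else if hg : g ∈ N then (hH5 g hg).choose else 1

lemma Hfun_one : Hfun N T f Rel hH5 1 = 1 := by unfold Hfun; simp

lemma Hfun_rel (hRel11 : Rel 1 1) {g : G} (hg : g ∈ N) : Rel g (Hfun N T f Rel hH5 g) := by
  unfold Hfun; split_ifs with h1
  · rw [h1]; exact hRel11
  · exact (hH5 g hg).choose_spec.1

lemma Hfun_compat {g : G} (hg : g ∈ N) {x : G} (hx : x ∈ T) (hx2 : g⁻¹ * x * g ∈ T) :
    Hfun N T f Rel hH5 g * f (g⁻¹ * x * g) * (Hfun N T f Rel hH5 g)⁻¹ = f x := by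
  unfold Hfun; split_ifs with h1
  · subst h1
    rw [show (1:G)⁻¹ * x * 1 = x by group]; simp
  · exact (hH5 g hg).choose_spec.2 x hx hx2

noncomputable def sFun (g : G) : G :=
  f (tauFun T g) * Hfun N T f Rel hH5 (dcRep T g) * f (tauFun' T g)

lemma keyW (hfmul : ∀ t ∈ T, ∀ t' ∈ T, f (t * t') = f t * f t') {d : G} (hd : d ∈ N) {t1 t1' t2 t2' : G} (h1 : t1 ∈ T) (h1' : t1' ∈ T)
    (h2 : t2 ∈ T) (h2' : t2' ∈ T) (heq : t1 * d * t1' = t2 * d * t2') :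
    f t1 * Hfun N T f Rel hH5 d * f t1' = f t2 * Hfun N T f Rel hH5 d * f t2' := by
  have hx : t2⁻¹ * t1 ∈ T := mul_mem (inv_mem h2) h1
  have ht2'' : t2' = (d⁻¹ * (t2⁻¹ * t1) * d) * t1' := by
    calc t2' = d⁻¹ * t2⁻¹ * (t2 * d * t2') := by group
    _ = d⁻¹ * t2⁻¹ * (t1 * d * t1') := by rw [heq]
    _ = (d⁻¹ * (t2⁻¹ * t1) * d) * t1' := by group
  have hxd : d⁻¹ * (t2⁻¹ * t1) * d ∈ T := by
    have h5 : d⁻¹ * (t2⁻¹ * t1) * d = t2' * t1'⁻¹ := by rw [ht2'']; group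
    rw [h5]; exact mul_mem h2' (inv_mem h1')
  have hc := Hfun_compat N T f Rel hH5 hd hx hxd
  have e1 : f t1 = f t2 * f (t2⁻¹ * t1) := by
    rw [← hfmul t2 h2 _ hx]; congr 1; group
  have e2 : f t2' = f (d⁻¹ * (t2⁻¹ * t1) * d) * f t1' := by
    rw [ht2'']; exact hfmul _ hxd t1' h1'
  rw [e1, e2, ← hc]; group

lemma sFun_T (hfmul : ∀ t ∈ T, ∀ t' ∈ T, f (t * t') = f t * f t') {t : G} (ht : t ∈ T) : sFun N T f Rel hH5 t = f t := by
  have hd1 : dcRep T t = 1 := dcRep_of_mem T ht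
  have h3 : t = tauFun T t * tauFun' T t := by
    conv_lhs => rw [decomp T t, hd1, mul_one]
  unfold sFun
  rw [hd1, Hfun_one, mul_one, ← hfmul _ (tauFun_mem T t) _ (tauFun'_mem T t), ← h3]

lemma sFun_right (hfmul : ∀ t ∈ T, ∀ t' ∈ T, f (t * t') = f t * f t') (hTN : T ≤ N) {g t : G} (hg : g ∈ N) (ht : t ∈ T) :
    sFun N T f Rel hH5 (g * t) = sFun N T f Rel hH5 g * f t := by
  have hdc : dcRep T (g * t) = dcRep T g := dcRep_mul_right T g ht
  have e1 : tauFun T (g * t) * dcRep T g * tauFun' T (g * t) = g * t := by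
    rw [← hdc]; exact (decomp T (g * t)).symm
  have e2 : tauFun T g * dcRep T g * (tauFun' T g * t) = g * t := by
    conv_rhs => rw [decomp T g]
    group
  have hW := keyW N T f Rel hH5 hfmul (dcRep_mem T hTN hg) (tauFun_mem T (g * t))
    (tauFun'_mem T (g * t)) (tauFun_mem T g) (mul_mem (tauFun'_mem T g) ht) (e1.trans e2.symm)
  unfold sFun
  rw [hdc, hW, hfmul _ (tauFun'_mem T g) t ht]
  group

lemma sFun_left (hfmul : ∀ t ∈ T, ∀ t' ∈ T, f (t * t') = f t * f t') (hTN : T ≤ N) {g t : G} (hg : g ∈ N) (ht : t ∈ T) :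
    sFun N T f Rel hH5 (t * g) = f t * sFun N T f Rel hH5 g := by
  have hdc : dcRep T (t * g) = dcRep T g := dcRep_mul_left T g ht
  have e1 : tauFun T (t * g) * dcRep T g * tauFun' T (t * g) = t * g := by
    rw [← hdc]; exact (decomp T (t * g)).symm
  have e2 : (t * tauFun T g) * dcRep T g * tauFun' T g = t * g := by
    conv_rhs => rw [decomp T g]
    group
  have hW := keyW N T f Rel hH5 hfmul (dcRep_mem T hTN hg) (tauFun_mem T (t * g))
    (tauFun'_mem T (t * g)) (mul_mem ht (tauFun_mem T g)) (tauFun'_mem T g) (e1.trans e2.symm)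
  unfold sFun
  rw [hdc, hW, hfmul t ht _ (tauFun_mem T g)]
  group

lemma sFun_rel (hTN : T ≤ N) (hRel11 : Rel 1 1) (hRel1 : ∀ t ∈ T, Rel t (f t))
    (hRelmul : ∀ n m n' m', n' ∈ N → Rel n m → Rel n' m' → Rel (n * n') (m * m'))
    {g : G} (hg : g ∈ N) : Rel g (sFun N T f Rel hH5 g) := by
  have r1 : Rel (tauFun T g) (f (tauFun T g)) := hRel1 _ (tauFun_mem T g)
  have r2 : Rel (dcRep T g) (Hfun N T f Rel hH5 (dcRep T g)) :=
    Hfun_rel N T f Rel hH5 hRel11 (dcRep_mem T hTN hg)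
  have r3 : Rel (tauFun' T g) (f (tauFun' T g)) := hRel1 _ (tauFun'_mem T g)
  have r12 := hRelmul _ _ _ _ (dcRep_mem T hTN hg) r1 r2
  have r123 := hRelmul _ _ _ _ (hTN (tauFun'_mem T g)) r12 r3
  rw [← decomp T g] at r123
  exact r123

end SFun

theorem engine {G : Type*} [Group G] [Finite G] (N T Z : Subgroup G) (f : G → G)
    (Rel : G → G → Prop)
    (hTN : T ≤ N)
    (hf1 : f 1 = 1)
    (hfmul : ∀ t ∈ T, ∀ t' ∈ T, f (t * t') = f t * f t')
    (hZN : ∀ n ∈ N, ∀ z ∈ Z, n * z * n⁻¹ ∈ Z)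
    (hZcomm : ∀ a ∈ Z, ∀ b ∈ Z, a * b = b * a)
    (hRel1 : ∀ t ∈ T, Rel t (f t))
    (hRelmul : ∀ n m n' m', n' ∈ N → Rel n m → Rel n' m' → Rel (n * n') (m * m'))
    (hRelN : ∀ n ∈ N, ∀ m, Rel n m → m ∈ N)
    (hRelZ : ∀ n m m', Rel n m → Rel n m' → m⁻¹ * m' ∈ Z)
    (hRelzmul : ∀ n ∈ N, ∀ m z, z ∈ Z → Rel n m → Rel n (z * m))
    (hH5 : ∀ g ∈ N, ∃ h, Rel g h ∧ ∀ x ∈ T, g⁻¹ * x * g ∈ T → h * f (g⁻¹ * x * g) * h⁻¹ = f x)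
    (hcop : Nat.Coprime ((T.subgroupOf N).index) (Nat.card Z)) :
    ∃ ψ : G → G, (∀ a ∈ N, ∀ b ∈ N, ψ (a * b) = ψ a * ψ b) ∧ (∀ t ∈ T, ψ t = f t) ∧
      (∀ a ∈ N, Rel a (ψ a)) := by
  classical
  have hRel11 : Rel 1 1 := by have h0 := hRel1 1 (one_mem T); rwa [hf1] at h0
  -- the bi-equivariant quasi-section
  obtain ⟨s, hsT, hsR, hsL, hsRel⟩ :
      ∃ s : G → G, (∀ t ∈ T, s t = f t) ∧ (∀ g ∈ N, ∀ t ∈ T, s (g * t) = s g * f t) ∧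
        (∀ g ∈ N, ∀ t ∈ T, s (t * g) = f t * s g) ∧ (∀ g ∈ N, Rel g (s g)) :=
    ⟨sFun N T f Rel hH5, fun t ht => sFun_T N T f Rel hH5 hfmul ht,
      fun g hg t ht => sFun_right N T f Rel hH5 hfmul hTN hg ht,
      fun g hg t ht => sFun_left N T f Rel hH5 hfmul hTN hg ht,
      fun g hg => sFun_rel N T f Rel hH5 hTN hRel11 hRel1 hRelmul hg⟩
  have hsmem : ∀ {g : G}, g ∈ N → s g ∈ N := fun {g} hg => hRelN _ hg _ (hsRel g hg)
  -- the 2-cocycle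
  obtain ⟨c, hcd⟩ : ∃ c : G → G → G, ∀ a b, c a b = s a * s b * (s (a * b))⁻¹ :=
    ⟨_, fun _ _ => rfl⟩
  have c_mem : ∀ {a b : G}, a ∈ N → b ∈ N → c a b ∈ Z := by
    intro a b ha hb
    have h1 : Rel (a * b) (s a * s b) := hRelmul _ _ _ _ hb (hsRel a ha) (hsRel b hb)
    have h2 : (s (a * b))⁻¹ * (s a * s b) ∈ Z := hRelZ _ _ _ (hsRel _ (mul_mem ha hb)) h1
    have h3 : c a b = s (a * b) * ((s (a * b))⁻¹ * (s a * s b)) * (s (a * b))⁻¹ := by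
      rw [hcd]; group
    rw [h3]
    exact hZN _ (hsmem (mul_mem ha hb)) _ h2
  have c_right : ∀ {a b t : G}, a ∈ N → b ∈ N → t ∈ T → c a (b * t) = c a b := by
    intro a b t ha hb ht
    rw [hcd, hcd, hsR b hb t ht, ← mul_assoc a b t, hsR (a * b) (mul_mem ha hb) t ht,
      mul_inv_rev]
    group
  have c_left : ∀ {t b : G}, t ∈ T → b ∈ N → c t b = 1 := by
    intro t b ht hb
    rw [hcd, hsT t ht, hsL b hb t ht, mul_inv_rev]
    group
  have cocycle : ∀ a b e : G, c a b * c (a * b) e = s a * c b e * (s a)⁻¹ * c a (b * e) := by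
    intro a b e
    simp only [hcd]
    rw [show a * (b * e) = a * b * e from (mul_assoc a b e).symm]
    group
  -- the coset space
  letI : Fintype (↥N ⧸ T.subgroupOf N) := Fintype.ofFinite _
  set Ω := ↥N ⧸ T.subgroupOf N with hΩ
  set ρ : Ω → G := fun ω => ((Quotient.out ω : ↥N) : G) with hρ
  have hρN : ∀ ω, ρ ω ∈ N := fun ω => (Quotient.out ω).2
  have hρcoset : ∀ (b : ↥N) (ω : Ω), (ρ (b • ω))⁻¹ * ((b : G) * ρ ω) ∈ T := by
    intro b ω
    have h1 : (b • ω) = QuotientGroup.mk (b * Quotient.out ω) := by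
      conv_lhs => rw [← QuotientGroup.out_eq' ω]
      rfl
    have h2 : (QuotientGroup.mk (Quotient.out (b • ω)) : ↥N ⧸ T.subgroupOf N) =
        QuotientGroup.mk (b * Quotient.out ω) := by
      rw [QuotientGroup.out_eq', h1]
    have h3 := QuotientGroup.eq.mp h2
    rw [Subgroup.mem_subgroupOf] at h3
    simpa using h3
  -- Z as a commutative group
  letI : CommGroup ↥Z :=
    { (inferInstance : Group ↥Z) with
      mul_comm := fun a b => by ext; exact hZcomm _ a.2 _ b.2 }
  -- conjugation action on Z
  obtain ⟨ν, hν⟩ : ∃ ν : (n : G) → n ∈ N → (↥Z →* ↥Z),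
      ∀ n hn z, ((ν n hn z : ↥Z) : G) = n * (z : G) * n⁻¹ :=
    ⟨fun n hn =>
      { toFun := fun z => ⟨n * (z : G) * n⁻¹, hZN n hn _ z.2⟩
        map_one' := by ext; simp
        map_mul' := by intro x y; ext; push_cast; group },
      fun _ _ _ => rfl⟩
  -- Z-valued cocycle and its average
  obtain ⟨cz, hcz⟩ : ∃ cz : (a : G) → a ∈ N → (b : G) → b ∈ N → ↥Z,
      ∀ a ha b hb, ((cz a ha b hb : ↥Z) : G) = c a b :=
    ⟨fun a ha b hb => ⟨c a b, c_mem ha hb⟩, fun _ _ _ _ => rfl⟩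
  obtain ⟨E, hE⟩ : ∃ E : (a : G) → a ∈ N → ↥Z,
      ∀ a ha, E a ha = ∏ ω : Ω, cz a ha (ρ ω) (hρN ω) := ⟨_, fun _ _ => rfl⟩
  set k := Fintype.card Ω with hk
  have key1 : ∀ (a : G) (ha : a ∈ N) (b : G) (hb : b ∈ N),
      (cz a ha b hb) ^ k =
        (ν (s a) (hsmem ha)) (E b hb) * E a ha * (E (a * b) (mul_mem ha hb))⁻¹ := by
    intro a ha b hb
    have hterm : ∀ ω : Ω,
        cz a ha b hb * cz (a * b) (mul_mem ha hb) (ρ ω) (hρN ω) =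
          (ν (s a) (hsmem ha)) (cz b hb (ρ ω) (hρN ω)) *
            cz a ha (ρ ((⟨b, hb⟩ : ↥N) • ω)) (hρN _) := by
      intro ω
      ext
      push_cast [hcz, hν]
      have h4 : c a (b * ρ ω) = c a (ρ ((⟨b, hb⟩ : ↥N) • ω)) := by
        have h5 : b * ρ ω = ρ ((⟨b, hb⟩ : ↥N) • ω) *
            ((ρ ((⟨b, hb⟩ : ↥N) • ω))⁻¹ * (b * ρ ω)) := by group
        rw [h5, c_right ha (hρN _) (hρcoset ⟨b, hb⟩ ω)]
      rw [← h4]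
      exact cocycle a b (ρ ω)
    have h6 : ∏ ω : Ω, (cz a ha b hb * cz (a * b) (mul_mem ha hb) (ρ ω) (hρN ω)) =
        ∏ ω : Ω, ((ν (s a) (hsmem ha)) (cz b hb (ρ ω) (hρN ω)) *
          cz a ha (ρ ((⟨b, hb⟩ : ↥N) • ω)) (hρN _)) :=
      Finset.prod_congr rfl fun ω _ => hterm ω
    rw [Finset.prod_mul_distrib, Finset.prod_const, Finset.card_univ,
      Finset.prod_mul_distrib, ← map_prod] at h6
    have h7 : ∏ ω : Ω, cz a ha (ρ ((⟨b, hb⟩ : ↥N) • ω)) (hρN _) =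
        ∏ ω : Ω, cz a ha (ρ ω) (hρN ω) :=
      Equiv.prod_comp (MulAction.toPerm (⟨b, hb⟩ : ↥N)) (fun ω => cz a ha (ρ ω) (hρN ω))
    rw [h7, ← hE, ← hE, ← hE] at h6
    exact eq_mul_inv_iff_mul_eq.mpr h6
  have key2 : ∀ (t : G) (ht : t ∈ T), E t (hTN ht) = 1 := by
    intro t ht
    rw [hE]
    apply Finset.prod_eq_one
    intro ω _
    ext
    rw [hcz]
    simpa using c_left ht (hρN ω)
  -- inverse of k modulo the order of Z
  have hcopk : Nat.Coprime k (Nat.card ↥Z) := by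
    have : (T.subgroupOf N).index = k := by
      rw [Subgroup.index_eq_card, hk, Nat.card_eq_fintype_card]
    rwa [this] at hcop
  set n := Nat.card ↥Z with hn
  have hnpos : 0 < n := Nat.card_pos
  set k' := k ^ (Nat.totient n - 1) with hk'
  have htpos : 0 < Nat.totient n := Nat.totient_pos.mpr hnpos
  have hkk' : ∀ z : ↥Z, z ^ (k * k') = z := by
    intro z
    have h8 : k * k' = k ^ Nat.totient n := by
      rw [hk', ← pow_succ']
      congr 1
      omega
    have h9 : k ^ Nat.totient n ≡ 1 [MOD n] := Nat.ModEq.pow_totient hcopk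
    have h10 : orderOf z ∣ n := hn ▸ orderOf_dvd_natCard z
    calc z ^ (k * k') = z ^ (k ^ Nat.totient n) := by rw [h8]
    _ = z ^ 1 := pow_eq_pow_iff_modEq.mpr (Nat.ModEq.of_dvd h10 h9)
    _ = z := pow_one z
  -- the corrected section is a homomorphism
  obtain ⟨ψ, hψ⟩ : ∃ ψ : G → G,
      ∀ a, ψ a = if ha : a ∈ N then ((((E a ha) ^ k')⁻¹ : ↥Z) : G) * s a else 1 :=
    ⟨_, fun _ => rfl⟩
  refine ⟨ψ, ?_, ?_, ?_⟩
  · -- homomorphism on N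
    intro a ha b hb
    rw [hψ, hψ, hψ, dif_pos ha, dif_pos hb, dif_pos (mul_mem ha hb)]
    have hsab : s a * s b = c a b * s (a * b) := by rw [hcd]; group
    set za : ↥Z := (E a ha) ^ k' with hza
    set zb : ↥Z := (E b hb) ^ k' with hzb
    set zab : ↥Z := (E (a * b) (mul_mem ha hb)) ^ k' with hzab
    have hcomm : s a * ((zb⁻¹ : ↥Z) : G) = ((ν (s a) (hsmem ha) zb⁻¹ : ↥Z) : G) * s a := by
      rw [hν]; group
    symm
    have hZid : za⁻¹ * (ν (s a) (hsmem ha) zb⁻¹) * cz a ha b hb = zab⁻¹ := by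
      have hc1 : cz a ha b hb = ν (s a) (hsmem ha) zb * za * zab⁻¹ := by
        calc cz a ha b hb = (cz a ha b hb) ^ (k * k') := (hkk' _).symm
        _ = ((cz a ha b hb) ^ k) ^ k' := by rw [pow_mul]
        _ = ((ν (s a) (hsmem ha)) (E b hb) * E a ha * (E (a * b) (mul_mem ha hb))⁻¹) ^ k' := by
            rw [key1 a ha b hb]
        _ = ν (s a) (hsmem ha) zb * za * zab⁻¹ := by
            rw [mul_pow, mul_pow, inv_pow, map_pow]
      rw [hc1, map_inv]
      group
    calc ((za⁻¹ : ↥Z) : G) * s a * (((zb⁻¹ : ↥Z) : G) * s b)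
        = ((za⁻¹ : ↥Z) : G) * (s a * ((zb⁻¹ : ↥Z) : G)) * s b := by group
    _ = ((za⁻¹ : ↥Z) : G) * (((ν (s a) (hsmem ha) zb⁻¹ : ↥Z) : G) * s a) * s b := by rw [hcomm]
    _ = ((za⁻¹ : ↥Z) : G) * ((ν (s a) (hsmem ha) zb⁻¹ : ↥Z) : G) * (s a * s b) := by group
    _ = ((za⁻¹ : ↥Z) : G) * ((ν (s a) (hsmem ha) zb⁻¹ : ↥Z) : G) *
          (((cz a ha b hb : ↥Z) : G) * s (a * b)) := by rw [hcz, hsab]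
    _ = ((za⁻¹ * (ν (s a) (hsmem ha) zb⁻¹) * cz a ha b hb : ↥Z) : G) * s (a * b) := by
        push_cast; group
    _ = ((zab⁻¹ : ↥Z) : G) * s (a * b) := by rw [hZid]
  · -- restriction to T
    intro t ht
    rw [hψ, dif_pos (hTN ht), key2 t ht, one_pow, inv_one, OneMemClass.coe_one, one_mul,
      hsT t ht]
  · -- Rel
    intro a ha
    rw [hψ, dif_pos ha]
    exact hRelzmul _ ha _ _ (SetLike.coe_mem _) (hsRel a ha)

end Stmt13

/-- One direction of fusion preservation for an automorphism `φ` of `S ≤ G`: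
`φ ∘ Hom_G(A, B) ∘ φ⁻¹ ⊆ Hom_G(φA, φB)` for all `A, B ≤ S`, expressed elementwise. -/
def FusionPreservingAux {G : Type*} [Group G] (S : Subgroup G) (φ : S ≃* S) : Prop :=
  ∀ (g : G) (A : Subgroup G) (hA : A ≤ S) (hgA : ∀ a ∈ A, g * a * g⁻¹ ∈ S),
    ∃ h : G, ∀ (a : G) (ha : a ∈ A),
      ((φ ⟨g * a * g⁻¹, hgA a ha⟩ : S) : G) = h * ((φ ⟨a, hA ha⟩ : S) : G) * h⁻¹

/-- `φ ∈ Aut(S)` is fusion preserving with respect to `F_S(G)`: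
`φ ∘ Hom_G(A, B) ∘ φ⁻¹ = Hom_G(φA, φB)` for all `A, B ≤ S`. -/
def IsFusionPreserving {G : Type*} [Group G] (S : Subgroup G) (φ : S ≃* S) : Prop :=
  FusionPreservingAux S φ ∧ FusionPreservingAux S φ.symm

/-- Let `G` be finite with `S ∈ Syl_p(G)`, and let `P ≤ S` satisfy `C_G(P) ≤ P` and
`N_S(P) ∈ Syl_p(N_G(P))`.  Then for each fusion preserving `φ ∈ Aut(S)` with `φ(P) = P`,
the restriction `φ|_{N_S(P)}` extends to an automorphism of `N_G(P)`. -/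
theorem stmt_13 (p : ℕ) [Fact p.Prime] (G : Type*) [Group G] [Finite G]
    (S : Sylow p G) (P : Subgroup G) (hPS : P ≤ (S : Subgroup G))
    (hcent : Subgroup.centralizer (P : Set G) ≤ P)
    (hsyl : ∃ Q : Sylow p ↥(Subgroup.normalizer (P : Set G)),
      (Q : Subgroup ↥(Subgroup.normalizer (P : Set G))) = ((S : Subgroup G) ⊓ (Subgroup.normalizer (P : Set G))).subgroupOf (Subgroup.normalizer (P : Set G)))
    (φ : ↥(S : Subgroup G) ≃* ↥(S : Subgroup G))
    (hφ : IsFusionPreserving (S : Subgroup G) φ)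
    (hφP : Subgroup.map φ.toMonoidHom (P.subgroupOf (S : Subgroup G))
      = P.subgroupOf (S : Subgroup G)) :
    ∃ ψ : ↥(Subgroup.normalizer (P : Set G)) ≃* ↥(Subgroup.normalizer (P : Set G)),
      ∀ (x : G) (hxS : x ∈ (S : Subgroup G)) (hxN : x ∈ (Subgroup.normalizer (P : Set G))),
        ((ψ ⟨x, hxN⟩ : ↥(Subgroup.normalizer (P : Set G))) : G) = ((φ ⟨x, hxS⟩ : ↥(S : Subgroup G)) : G) := by
  classical
  set N : Subgroup G := Subgroup.normalizer (P : Set G) with hN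
  set T : Subgroup G := (S : Subgroup G) ⊓ Subgroup.normalizer (P : Set G) with hT
  set Z : Subgroup G := Subgroup.centralizer (P : Set G) with hZdef
  obtain ⟨F, hFdef⟩ : ∃ F : G → G,
      ∀ x, F x = if h : x ∈ (S : Subgroup G) then ((φ ⟨x, h⟩ : _) : G) else 1 :=
    ⟨_, fun _ => rfl⟩
  have hFS : ∀ {x : G} (hx : x ∈ (S : Subgroup G)), F x = ((φ ⟨x, hx⟩ : _) : G) := by
    intro x hx; rw [hFdef, dif_pos hx]
  have hPN : P ≤ N := Subgroup.le_normalizer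
  have hPT : P ≤ T := le_inf hPS Subgroup.le_normalizer
  have hTN : T ≤ N := inf_le_right
  have hTS : T ≤ (S : Subgroup G) := inf_le_left
  -- `F` preserves `P`
  have hφPfwd : ∀ {a : G}, a ∈ P → F a ∈ P := by
    intro a ha
    rw [hFS (hPS ha)]
    have h2 : φ ⟨a, hPS ha⟩ ∈ P.subgroupOf (S : Subgroup G) := by
      rw [← hφP]
      exact ⟨⟨a, hPS ha⟩, Subgroup.mem_subgroupOf.mpr ha, rfl⟩
    exact Subgroup.mem_subgroupOf.mp h2
  have hφPsurj : ∀ {b : G}, b ∈ P → ∃ a ∈ P, F a = b := by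
    intro b hb
    have h1 : (⟨b, hPS hb⟩ : ↥(S : Subgroup G)) ∈ P.subgroupOf _ :=
      Subgroup.mem_subgroupOf.mpr hb
    rw [← hφP] at h1
    obtain ⟨x, hx, hxe⟩ := h1
    refine ⟨(x : G), Subgroup.mem_subgroupOf.mp hx, ?_⟩
    rw [hFS x.2]
    exact congrArg Subtype.val hxe
  -- `Z` facts
  have hZP : Z ≤ P := hcent
  have hZS : Z ≤ (S : Subgroup G) := hZP.trans hPS
  have hZcomm : ∀ a ∈ Z, ∀ b ∈ Z, a * b = b * a := by
    intro a haz b hbz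
    exact Subgroup.mem_centralizer_iff.mp hbz a (hZP haz)
  have hZN' : ∀ n ∈ N, ∀ z ∈ Z, n * z * n⁻¹ ∈ Z := by
    intro n hn z hz
    rw [hZdef, Subgroup.mem_centralizer_iff]
    intro g hg
    have h1 : n⁻¹ * g * n ∈ P := by
      have h0 := (Subgroup.mem_normalizer_iff.mp (inv_mem hn) g).mp hg
      rwa [inv_inv] at h0
    have h2 : (n⁻¹ * g * n) * z = z * (n⁻¹ * g * n) :=
      Subgroup.mem_centralizer_iff.mp hz _ h1
    calc g * (n * z * n⁻¹) = n * ((n⁻¹ * g * n) * z) * n⁻¹ := by group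
    _ = n * (z * (n⁻¹ * g * n)) * n⁻¹ := by rw [h2]
    _ = n * z * n⁻¹ * g := by group
  -- `F` is multiplicative on `S`
  have hF1 : F 1 = 1 := by
    rw [hFS (one_mem _)]
    have : (⟨(1 : G), one_mem _⟩ : ↥(S : Subgroup G)) = 1 := rfl
    rw [this, map_one]; rfl
  have hFmulS : ∀ {x y : G} (hx : x ∈ (S : Subgroup G)) (hy : y ∈ (S : Subgroup G)),
      F (x * y) = F x * F y := by
    intro x y hx hy
    rw [hFS hx, hFS hy, hFS (mul_mem hx hy)]
    have : (⟨x * y, mul_mem hx hy⟩ : ↥(S : Subgroup G)) = ⟨x, hx⟩ * ⟨y, hy⟩ := rfl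
    rw [this, map_mul]; rfl
  -- `Rel` facts
  have hRel1 : ∀ t ∈ T, ∀ a ∈ P, F t * F a * (F t)⁻¹ = F (t * a * t⁻¹) := by
    intro t ht a haP
    have htS := hTS ht
    have haS := hPS haP
    have h3 : t * a * t⁻¹ ∈ (S : Subgroup G) := mul_mem (mul_mem htS haS) (inv_mem htS)
    rw [hFS htS, hFS haS, hFS h3]
    have h4 : (⟨t * a * t⁻¹, h3⟩ : ↥(S : Subgroup G)) = ⟨t, htS⟩ * ⟨a, haS⟩ * ⟨t, htS⟩⁻¹ := rfl
    rw [h4, map_mul, map_mul, map_inv]; rfl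
  have hRelmul : ∀ n m n' m' : G, n' ∈ N →
      (∀ a ∈ P, m * F a * m⁻¹ = F (n * a * n⁻¹)) →
      (∀ a ∈ P, m' * F a * m'⁻¹ = F (n' * a * n'⁻¹)) →
      (∀ a ∈ P, (m * m') * F a * (m * m')⁻¹ = F ((n * n') * a * (n * n')⁻¹)) := by
    intro n m n' m' hn' h1 h2 a haP
    have h4 : n' * a * n'⁻¹ ∈ P := (Subgroup.mem_normalizer_iff.mp hn' a).mp haP
    calc (m * m') * F a * (m * m')⁻¹ = m * (m' * F a * m'⁻¹) * m⁻¹ := by group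
    _ = m * F (n' * a * n'⁻¹) * m⁻¹ := by rw [h2 a haP]
    _ = F (n * (n' * a * n'⁻¹) * n⁻¹) := h1 _ h4
    _ = F ((n * n') * a * (n * n')⁻¹) := by
        rw [show n * (n' * a * n'⁻¹) * n⁻¹ = (n * n') * a * (n * n')⁻¹ by group]
  have hRelN : ∀ n ∈ N, ∀ m : G, (∀ a ∈ P, m * F a * m⁻¹ = F (n * a * n⁻¹)) → m ∈ N := by
    intro n hn m hRnm
    have hsub : ∀ b ∈ P, m * b * m⁻¹ ∈ P := by
      intro b hb
      obtain ⟨a, haP, hFa⟩ := hφPsurj hb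
      rw [← hFa, hRnm a haP]
      exact hφPfwd ((Subgroup.mem_normalizer_iff.mp hn a).mp haP)
    have hmap : P.map (MulAut.conj m).toMonoidHom ≤ P := by
      rintro _ ⟨b, hb, rfl⟩
      simpa [MulAut.conj_apply] using hsub b hb
    have hinj0 : Function.Injective ((MulAut.conj m).toMonoidHom : G →* G) :=
      fun a b hab => (MulAut.conj m).injective hab
    have heq : P.map (MulAut.conj m).toMonoidHom = P := by
      apply Subgroup.eq_of_le_of_card_ge hmap
      exact le_of_eq (Nat.card_congr (Subgroup.equivMapOfInjective P _ hinj0).toEquiv)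
    rw [hN, Subgroup.mem_normalizer_iff]
    intro h
    constructor
    · exact fun hh => hsub h hh
    · intro hh
      have : m * h * m⁻¹ ∈ P.map (MulAut.conj m).toMonoidHom := heq.symm ▸ hh
      obtain ⟨b, hb, hbe⟩ := this
      have : b = h := by
        have hbe' : m * b * m⁻¹ = m * h * m⁻¹ := by
          simpa [MulAut.conj_apply] using hbe
        exact mul_left_cancel (mul_right_cancel hbe')
      rwa [← this]
  have hRelZ : ∀ n m m' : G, (∀ a ∈ P, m * F a * m⁻¹ = F (n * a * n⁻¹)) →
      (∀ a ∈ P, m' * F a * m'⁻¹ = F (n * a * n⁻¹)) → m⁻¹ * m' ∈ Z := by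
    intro n m m' h1 h2
    rw [hZdef, Subgroup.mem_centralizer_iff]
    intro g hg
    obtain ⟨a, haP, hFa⟩ := hφPsurj hg
    have h3 : m * F a * m⁻¹ = m' * F a * m'⁻¹ := (h1 a haP).trans (h2 a haP).symm
    rw [← hFa]
    calc F a * (m⁻¹ * m') = m⁻¹ * (m * F a * m⁻¹) * m' := by group
    _ = m⁻¹ * (m' * F a * m'⁻¹) * m' := by rw [h3]
    _ = (m⁻¹ * m') * F a := by group
  have hRelzmul : ∀ n ∈ N, ∀ m z : G, z ∈ Z →
      (∀ a ∈ P, m * F a * m⁻¹ = F (n * a * n⁻¹)) →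
      (∀ a ∈ P, (z * m) * F a * (z * m)⁻¹ = F (n * a * n⁻¹)) := by
    intro n hn m z hz h1 a haP
    have hnan : n * a * n⁻¹ ∈ P := (Subgroup.mem_normalizer_iff.mp hn a).mp haP
    have h5 : F (n * a * n⁻¹) * z = z * F (n * a * n⁻¹) :=
      Subgroup.mem_centralizer_iff.mp hz _ (hφPfwd hnan)
    calc (z * m) * F a * (z * m)⁻¹ = z * (m * F a * m⁻¹) * z⁻¹ := by group
    _ = z * F (n * a * n⁻¹) * z⁻¹ := by rw [h1 a haP]
    _ = F (n * a * n⁻¹) := by rw [← h5]; group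
  -- the fusion hypothesis, packaged
  have hH5 : ∀ g ∈ N, ∃ h, (∀ a ∈ P, h * F a * h⁻¹ = F (g * a * g⁻¹)) ∧
      ∀ x ∈ T, g⁻¹ * x * g ∈ T → h * F (g⁻¹ * x * g) * h⁻¹ = F x := by
    intro g hg
    have hconj : ∀ (u x : G), ((MulAut.conj u).toMonoidHom : G →* G) x = u * x * u⁻¹ :=
      fun u x => rfl
    set D : Subgroup G := T ⊓ T.map (MulAut.conj g).toMonoidHom with hD
    set A : Subgroup G := D.map (MulAut.conj g⁻¹).toMonoidHom with hA
    have hAS : A ≤ (S : Subgroup G) := by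
      rintro _ ⟨y, hy, rfl⟩
      obtain ⟨hyT, w, hwT, hwe⟩ := hy
      have h6 : ((MulAut.conj g⁻¹).toMonoidHom : G →* G) y = w := by
        rw [← hwe, hconj, hconj]
        group
      rw [h6]; exact hTS hwT
    have hgA : ∀ a ∈ A, g * a * g⁻¹ ∈ (S : Subgroup G) := by
      rintro _ ⟨y, hy, rfl⟩
      have h6 : g * (((MulAut.conj g⁻¹).toMonoidHom : G →* G) y) * g⁻¹ = y := by
        rw [hconj]
        group
      rw [h6]; exact hTS hy.1
    obtain ⟨h, hh⟩ := hφ.1 g A hAS hgA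
    have hPA : P ≤ A := by
      intro x hx
      have hgx : g * x * g⁻¹ ∈ P := (Subgroup.mem_normalizer_iff.mp hg x).mp hx
      have hgxD : g * x * g⁻¹ ∈ D :=
        ⟨hPT hgx, ⟨x, hPT hx, by rw [hconj]⟩⟩
      exact ⟨g * x * g⁻¹, hgxD, by rw [hconj]; group⟩
    refine ⟨h, ?_, ?_⟩
    · intro a haP
      have haA : a ∈ A := hPA haP
      have h7 := hh a haA
      rw [hFS (hPS haP), hFS (hgA a haA)]
      exact h7.symm
    · intro x hxT hx2
      have hxD : x ∈ D := ⟨hxT, ⟨g⁻¹ * x * g, hx2, by rw [hconj]; group⟩⟩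
      have harg : ((MulAut.conj g⁻¹).toMonoidHom : G →* G) x = g⁻¹ * x * g := by
        rw [hconj]; group
      have haA' : g⁻¹ * x * g ∈ A := harg ▸ (⟨x, hxD, rfl⟩ :
        ((MulAut.conj g⁻¹).toMonoidHom : G →* G) x ∈ A)
      have h7 := hh (g⁻¹ * x * g) haA'
      have h8 : (⟨g * (g⁻¹ * x * g) * g⁻¹, hgA _ haA'⟩ : ↥(S : Subgroup G)) =
          ⟨x, hTS hxT⟩ := Subtype.ext (by group)
      rw [h8] at h7
      rw [hFS (hTS hx2), hFS (hTS hxT)]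
      have h9 : (⟨g⁻¹ * x * g, hTS hx2⟩ : ↥(S : Subgroup G)) = ⟨g⁻¹ * x * g, hAS haA'⟩ :=
        rfl
      rw [h9]
      exact h7.symm
  -- coprimality
  obtain ⟨Q, hQ⟩ := hsyl
  have hTQ : T.subgroupOf N = ↑Q := hQ.symm
  have hpk : ¬ (p ∣ (T.subgroupOf N).index) := by
    rw [hTQ]
    exact Q.not_dvd_index
  have hZpg : IsPGroup p ↥Z := by
    intro z
    obtain ⟨n', hn'⟩ := S.isPGroup' ⟨(z : G), hZS z.2⟩
    refine ⟨n', ?_⟩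
    have h10 := congrArg Subtype.val hn'
    push_cast at h10
    ext
    push_cast
    exact h10
  obtain ⟨m, hm⟩ := IsPGroup.exists_card_eq hZpg
  have hcop : Nat.Coprime ((T.subgroupOf N).index) (Nat.card ↥Z) := by
    rw [hm]
    exact (((Nat.Prime.coprime_iff_not_dvd Fact.out).mpr hpk).symm).pow_right m
  -- apply the engine
  obtain ⟨ψ, hψmul, hψT, hψRel⟩ :=
    Stmt13.engine N T Z F (fun n m => ∀ a ∈ P, m * F a * m⁻¹ = F (n * a * n⁻¹))
      hTN hF1 (fun t ht t' ht' => hFmulS (hTS ht) (hTS ht')) hZN' hZcomm hRel1 hRelmul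
      hRelN hRelZ hRelzmul hH5 hcop
  -- build the automorphism
  have hψmem : ∀ x : ↥N, ψ (x : G) ∈ N := fun x => hRelN _ x.2 _ (hψRel _ x.2)
  set Ψ : ↥N →* ↥N := MonoidHom.mk' (fun x => ⟨ψ (x : G), hψmem x⟩)
    (by intro x y; ext; exact hψmul _ x.2 _ y.2) with hΨ
  have hinj : Function.Injective Ψ := by
    rw [injective_iff_map_eq_one]
    intro x hx1
    have hψx1 : ψ (x : G) = 1 := congrArg Subtype.val hx1
    have hRelx := hψRel _ x.2
    rw [hψx1] at hRelx
    have hxZ : (x : G) ∈ Z := by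
      rw [hZdef, Subgroup.mem_centralizer_iff]
      intro a haP
      have h8 := hRelx a haP
      rw [one_mul, inv_one, mul_one] at h8
      have haS := hPS haP
      have hxa : (x : G) * a * (x : G)⁻¹ ∈ P :=
        (Subgroup.mem_normalizer_iff.mp x.2 a).mp haP
      rw [hFS haS, hFS (hPS hxa)] at h8
      have h10 : a = (x : G) * a * (x : G)⁻¹ :=
        congrArg Subtype.val (φ.injective (Subtype.coe_injective h8))
      calc a * (x : G) = ((x : G) * a * (x : G)⁻¹) * (x : G) := by rw [← h10]
      _ = (x : G) * a := by group
    have hxT : (x : G) ∈ T := hPT (hZP hxZ)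
    have h11 : ψ (x : G) = F (x : G) := hψT _ hxT
    rw [hψx1, hFS (hTS hxT)] at h11
    have h13 : (⟨(x : G), hTS hxT⟩ : ↥(S : Subgroup G)) = 1 := by
      apply φ.injective
      rw [map_one]
      exact Subtype.coe_injective h11.symm
    have h14 : (x : G) = 1 := congrArg Subtype.val h13
    exact Subtype.ext h14
  refine ⟨MulEquiv.ofBijective Ψ (Finite.injective_iff_bijective.mp hinj), ?_⟩
  intro x hxS hxN
  have hxT : x ∈ T := by rw [hT]; exact ⟨hxS, hxN⟩
  calc ((MulEquiv.ofBijective Ψ (Finite.injective_iff_bijective.mp hinj) ⟨x, hxN⟩ : ↥N) : G)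
      = ψ x := rfl
  _ = F x := hψT x hxT
  _ = _ := hFS hxS
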